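/- Let G = C₈ ⋊ Q₈ with the action a·c = c³, b·c = c⁵ as above, and let F: Q₈ → Hom(C₈, ℂ*) be the 1-cochain determined by F(a^{±1}) = ρ², F(b^{±1}) = ρ⁰, F((ab)^{±1}) = ρ², F(a²) = ρ⁰, where ρ generates Hom(C₈, ℂ*) ≅ ℤ/8. Then F is a 1-cocycle that is not a coboundary, but F² is the coboundary of ρ², so the class [F] ∈ H¹(Q₈, Hom(C₈, ℂ*)) has order exactly 2. -/
import Mathlib



private def tF19 : QuaternionGroup 2 → ZMod 8
  | .a i => if i.val % 2 = 0 then 0 else 2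
  | .xa i => if i.val % 2 = 0 then 0 else 2

private def tphi19 : QuaternionGroup 2 → ZMod 8
  | .a i => if i.val % 2 = 0 then 1 else 3
  | .xa i => if i.val % 2 = 0 then 5 else 7

/-- Identify `Hom(C₈, ℂ*) ≅ ℤ/8` (with `ρᵏ ↔ k`), so that `Q₈` acts on `ℤ/8` through a
homomorphism `φ : Q₈ → (ℤ/8)ˣ` with `φ(a) = 3`, `φ(b) = 5` (coming from the action
`a·c = c³`, `b·c = c⁵` of `Q₈` on `C₈` via `(g·χ)(c) = χ(g⁻¹·c)`).
The 1-cochain `F : Q₈ → ℤ/8` determined by `F(a^{±1}) = ρ²`, `F(b^{±1}) = ρ⁰`,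
`F((ab)^{±1}) = ρ²`, `F(a²) = ρ⁰` (and `F(1) = ρ⁰`) is a 1-cocycle which is not a
coboundary, while `F²` is the coboundary of `ρ²`; hence its class in
`H¹(Q₈, Hom(C₈, ℂ*))` has order exactly 2. -/
theorem stmt_19 (φ : QuaternionGroup 2 →* (ZMod 8)ˣ)
    (hφa : (φ (QuaternionGroup.a 1) : ZMod 8) = 3)
    (hφb : (φ (QuaternionGroup.xa 0) : ZMod 8) = 5)
    (F : QuaternionGroup 2 → ZMod 8)
    (hF1 : F 1 = 0)
    (hFa : F (QuaternionGroup.a 1) = 2) (hFa' : F ((QuaternionGroup.a 1)⁻¹) = 2)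
    (hFb : F (QuaternionGroup.xa 0) = 0) (hFb' : F ((QuaternionGroup.xa 0)⁻¹) = 0)
    (hFab : F (QuaternionGroup.a 1 * QuaternionGroup.xa 0) = 2)
    (hFab' : F ((QuaternionGroup.a 1 * QuaternionGroup.xa 0)⁻¹) = 2)
    (hFa2 : F (QuaternionGroup.a 1 ^ 2) = 0) :
    (∀ g h : QuaternionGroup 2, F (g * h) = (φ g : ZMod 8) * F h + F g) ∧
    (¬ ∃ m : ZMod 8, ∀ g : QuaternionGroup 2, F g = (φ g : ZMod 8) * m - m) ∧
    (∀ g : QuaternionGroup 2, F g + F g = (φ g : ZMod 8) * 2 - 2) := by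
  have hF : ∀ g : QuaternionGroup 2, F g = tF19 g := by
    have e0 : (QuaternionGroup.a 0 : QuaternionGroup 2) = 1 := rfl
    have e2 : (QuaternionGroup.a 2 : QuaternionGroup 2) = QuaternionGroup.a 1 ^ 2 := by decide
    have e3 : (QuaternionGroup.a 3 : QuaternionGroup 2) = (QuaternionGroup.a 1)⁻¹ := by decide
    have x1 : (QuaternionGroup.xa 1 : QuaternionGroup 2)
        = (QuaternionGroup.a 1 * QuaternionGroup.xa 0)⁻¹ := by decide
    have x2 : (QuaternionGroup.xa 2 : QuaternionGroup 2) = (QuaternionGroup.xa 0)⁻¹ := by decide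
    have x3 : (QuaternionGroup.xa 3 : QuaternionGroup 2)
        = QuaternionGroup.a 1 * QuaternionGroup.xa 0 := by decide
    rintro (i | i) <;> fin_cases i
    · show F (QuaternionGroup.a 0) = _; rw [e0, hF1]; rfl
    · show F (QuaternionGroup.a 1) = _; rw [hFa]; rfl
    · show F (QuaternionGroup.a 2) = _; rw [e2, hFa2]; rfl
    · show F (QuaternionGroup.a 3) = _; rw [e3, hFa']; rfl
    · show F (QuaternionGroup.xa 0) = _; rw [hFb]; rfl
    · show F (QuaternionGroup.xa 1) = _; rw [x1, hFab']; rfl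
    · show F (QuaternionGroup.xa 2) = _; rw [x2, hFb']; rfl
    · show F (QuaternionGroup.xa 3) = _; rw [x3, hFab]; rfl
  have hφ : ∀ g : QuaternionGroup 2, (φ g : ZMod 8) = tphi19 g := by
    have e0 : (QuaternionGroup.a 0 : QuaternionGroup 2) = 1 := rfl
    have e2 : (QuaternionGroup.a 2 : QuaternionGroup 2)
        = QuaternionGroup.a 1 * QuaternionGroup.a 1 := by decide
    have e3 : (QuaternionGroup.a 3 : QuaternionGroup 2)
        = QuaternionGroup.a 1 * QuaternionGroup.a 2 := by decide
    have x1 : (QuaternionGroup.xa 1 : QuaternionGroup 2)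
        = QuaternionGroup.xa 0 * QuaternionGroup.a 1 := by decide
    have x2 : (QuaternionGroup.xa 2 : QuaternionGroup 2)
        = QuaternionGroup.xa 0 * QuaternionGroup.a 2 := by decide
    have x3 : (QuaternionGroup.xa 3 : QuaternionGroup 2)
        = QuaternionGroup.xa 0 * QuaternionGroup.a 3 := by decide
    have h2 : (φ (QuaternionGroup.a 2) : ZMod 8) = 1 := by
      rw [e2, map_mul, Units.val_mul, hφa]; decide
    have h3 : (φ (QuaternionGroup.a 3) : ZMod 8) = 3 := by
      rw [e3, map_mul, Units.val_mul, hφa, h2]; decide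
    rintro (i | i) <;> fin_cases i
    · show (φ (QuaternionGroup.a 0) : ZMod 8) = _; rw [e0, map_one]; rfl
    · show (φ (QuaternionGroup.a 1) : ZMod 8) = _; rw [hφa]; rfl
    · show (φ (QuaternionGroup.a 2) : ZMod 8) = _; rw [h2]; rfl
    · show (φ (QuaternionGroup.a 3) : ZMod 8) = _; rw [h3]; rfl
    · show (φ (QuaternionGroup.xa 0) : ZMod 8) = _; rw [hφb]; rfl
    · show (φ (QuaternionGroup.xa 1) : ZMod 8) = _
      rw [x1, map_mul, Units.val_mul, hφb, hφa]; rfl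
    · show (φ (QuaternionGroup.xa 2) : ZMod 8) = _
      rw [x2, map_mul, Units.val_mul, hφb, h2]; rfl
    · show (φ (QuaternionGroup.xa 3) : ZMod 8) = _
      rw [x3, map_mul, Units.val_mul, hφb, h3]; rfl
  refine ⟨?_, ?_, ?_⟩
  · intro g h
    rw [hF, hF, hF, hφ]
    revert g h; decide
  · rintro ⟨m, hm⟩
    have h1 := hm (QuaternionGroup.a 1)
    have h2 := hm (QuaternionGroup.xa 0)
    rw [hFa, hφa] at h1
    rw [hFb, hφb] at h2
    have : (4 : ZMod 8) = 0 := by linear_combination 2 * h1 - h2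
    exact absurd this (by decide)
  · intro g
    rw [hF, hφ]
    revert g; decide
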